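/- Let G = (V, E) be an undirected connected simple graph on V = {1,…,N} with N ≥ 2. For each i ∈ V let a_i ∈ ℝ^N and b_i ∈ ℝ, assume the matrix A with rows a_1ᵀ,…,a_Nᵀ is nonsingular, and let x* = A⁻¹ b where b = (b_1,…,b_N)ᵀ. Let α_i > 0 for i ∈ V and β_{{i,j}} > 0 for {i,j} ∈ E. Then there exists a constant c > 0 such that every differentiable function x : [0,∞) → (ℝ^N)^N, x(t) = (x_1(t),…,x_N(t)), satisfying the system ẋ_i(t) = −α_i (a_iᵀ x_i(t) − b_i) a_i − Σ_{j : {i,j} ∈ E} β_{{i,j}} (x_i(t) − x_j(t)) for all i ∈ V and t ≥ 0 obeys ‖x(t) − x̄*‖ ≤ e^{−c t} ‖x(0) − x̄*‖ for all t ≥ 0, where x̄* = (x*,…,x*); in particular x_i(t) → x* as t → ∞ for every i ∈ V and every initial condition. -/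

import Mathlib

open Matrix Finset Filter

private lemma dps_nonneg {n : ℕ} (v : Fin n → ℝ) : 0 ≤ v ⬝ᵥ v :=
  Finset.sum_nonneg fun k _ => mul_self_nonneg _

private lemma coercive
    (N : ℕ) (hN : 2 ≤ N) (G : SimpleGraph (Fin N)) [DecidableRel G.Adj]
    (hG : G.Connected)
    (a : Fin N → Fin N → ℝ)
    (hinj : ∀ v : Fin N → ℝ, (∀ i, a i ⬝ᵥ v = 0) → v = 0)
    (α : Fin N → ℝ) (hα : ∀ i, 0 < α i)
    (β : Fin N → Fin N → ℝ)
    (hβ : ∀ i j, G.Adj i j → 0 < β i j) :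
    ∃ c : ℝ, 0 < c ∧ ∀ e : Fin N → Fin N → ℝ,
      c * (∑ i, e i ⬝ᵥ e i) ≤
        (∑ i, α i * (a i ⬝ᵥ e i)^2) +
          (1/2) * ∑ i, ∑ j ∈ Finset.univ.filter (fun j => G.Adj i j),
            β i j * ((e i - e j) ⬝ᵥ (e i - e j)) := by
  classical
  set Φ : (Fin N → Fin N → ℝ) → ℝ := fun e => ∑ i, e i ⬝ᵥ e i with hΦ
  set Q : (Fin N → Fin N → ℝ) → ℝ := fun e =>
    (∑ i, α i * (a i ⬝ᵥ e i)^2) +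
      (1/2) * ∑ i, ∑ j ∈ Finset.univ.filter (fun j => G.Adj i j),
        β i j * ((e i - e j) ⬝ᵥ (e i - e j)) with hQ
  have hΦnonneg : ∀ e, 0 ≤ Φ e := fun e => Finset.sum_nonneg fun i _ => dps_nonneg _
  have hQnonneg : ∀ e, 0 ≤ Q e := by
    intro e
    apply add_nonneg
    · exact Finset.sum_nonneg fun i _ => mul_nonneg (hα i).le (sq_nonneg _)
    · apply mul_nonneg (by norm_num)
      exact Finset.sum_nonneg fun i _ => Finset.sum_nonneg fun j hj =>
        mul_nonneg (hβ i j (by simpa using (Finset.mem_filter.mp hj).2)).le (dps_nonneg _)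
  -- Q e = 0 → e = 0
  have hQzero : ∀ e, Q e = 0 → e = 0 := by
    intro e he
    have h1 : (∑ i, α i * (a i ⬝ᵥ e i)^2) = 0 ∧
        (∑ i, ∑ j ∈ Finset.univ.filter (fun j => G.Adj i j),
          β i j * ((e i - e j) ⬝ᵥ (e i - e j))) = 0 := by
      have t1 : 0 ≤ (∑ i, α i * (a i ⬝ᵥ e i)^2) :=
        Finset.sum_nonneg fun i _ => mul_nonneg (hα i).le (sq_nonneg _)
      have t2 : 0 ≤ (∑ i, ∑ j ∈ Finset.univ.filter (fun j => G.Adj i j),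
          β i j * ((e i - e j) ⬝ᵥ (e i - e j))) :=
        Finset.sum_nonneg fun i _ => Finset.sum_nonneg fun j hj =>
          mul_nonneg (hβ i j (by simpa using (Finset.mem_filter.mp hj).2)).le (dps_nonneg _)
      have he' : (∑ i, α i * (a i ⬝ᵥ e i)^2) +
          (1/2) * ∑ i, ∑ j ∈ Finset.univ.filter (fun j => G.Adj i j),
            β i j * ((e i - e j) ⬝ᵥ (e i - e j)) = 0 := he
      constructor <;> linarith
    have hadj : ∀ i j, G.Adj i j → e i = e j := by
      intro i j hij
      have := (Finset.sum_eq_zero_iff_of_nonneg (fun i _ =>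
        Finset.sum_nonneg fun j hj => mul_nonneg
          (hβ i j (by simpa using (Finset.mem_filter.mp hj).2)).le (dps_nonneg _))).mp h1.2
      have hi := this i (Finset.mem_univ i)
      have := (Finset.sum_eq_zero_iff_of_nonneg (fun j hj => mul_nonneg
          (hβ i j (by simpa using (Finset.mem_filter.mp hj).2)).le (dps_nonneg _))).mp hi
      have hij' := this j (by simp [hij])
      have hb := hβ i j hij
      have : (e i - e j) ⬝ᵥ (e i - e j) = 0 := by
        rcases mul_eq_zero.mp hij' with h | h
        · exact absurd h hb.ne'
        · exact h
      have := dotProduct_self_eq_zero.mp this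
      exact sub_eq_zero.mp this
    have hall : ∀ i j, e i = e j := by
      intro i j
      obtain ⟨w⟩ := (hG i j)
      induction w with
      | nil => rfl
      | cons h p ih => exact (hadj _ _ h).trans ih
    have i0 : Fin N := ⟨0, by omega⟩
    have hav : ∀ i, a i ⬝ᵥ e i0 = 0 := by
      intro i
      have hi := (Finset.sum_eq_zero_iff_of_nonneg (fun i _ =>
        mul_nonneg (hα i).le (sq_nonneg _))).mp h1.1 i (Finset.mem_univ i)
      have : (a i ⬝ᵥ e i)^2 = 0 := by
        rcases mul_eq_zero.mp hi with h | h
        · exact absurd h (hα i).ne'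
        · exact h
      have h0 : a i ⬝ᵥ e i = 0 := by
        exact pow_eq_zero_iff (by norm_num) |>.mp this
      rwa [hall i i0] at h0
    have he0 : e i0 = 0 := hinj _ hav
    funext i
    rw [hall i i0, he0]; rfl
  -- continuity
  have hΦcont : Continuous Φ := by
    apply continuous_finset_sum; intro i _
    simp only [dotProduct]
    apply continuous_finset_sum; intro k _
    exact (continuous_apply_apply i k).mul
      (continuous_apply_apply i k)
  have hQcont : Continuous Q := by
    apply Continuous.add
    · apply continuous_finset_sum; intro i _
      apply Continuous.mul continuous_const
      apply Continuous.pow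
      simp only [dotProduct]
      apply continuous_finset_sum; intro k _
      exact Continuous.mul continuous_const ((continuous_apply k).comp (continuous_apply i))
    · apply Continuous.mul continuous_const
      apply continuous_finset_sum; intro i _
      apply continuous_finset_sum; intro j _
      apply Continuous.mul continuous_const
      simp only [dotProduct, Pi.sub_apply]
      apply continuous_finset_sum; intro k _
      exact ((continuous_apply_apply i k).sub
        (continuous_apply_apply j k)).mul
        ((continuous_apply_apply i k).sub
        (continuous_apply_apply j k))
  -- compact sphere
  set S : Set (Fin N → Fin N → ℝ) := {e | Φ e = 1} with hS
  have hSclosed : IsClosed S := isClosed_eq hΦcont continuous_const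
  have hNpos : 0 < N := by omega
  have hSbdd : Bornology.IsBounded S := by
    apply Bornology.IsBounded.subset (Metric.isBounded_closedBall (x := (0 : Fin N → Fin N → ℝ)) (r := 1))
    intro e he
    simp only [Metric.mem_closedBall, dist_zero_right]
    rw [pi_norm_le_iff_of_nonneg (by norm_num)]
    intro i
    rw [pi_norm_le_iff_of_nonneg (by norm_num)]
    intro k
    rw [Real.norm_eq_abs, abs_le_one_iff_mul_self_le_one]
    calc e i k * e i k ≤ e i ⬝ᵥ e i := by
            exact Finset.single_le_sum (f := fun k => e i k * e i k)
              (fun k _ => mul_self_nonneg _) (Finset.mem_univ k)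
      _ ≤ Φ e := Finset.single_le_sum (f := fun i => e i ⬝ᵥ e i)
              (fun i _ => dps_nonneg _) (Finset.mem_univ i)
      _ = 1 := he
  have hScompact : IsCompact S := Metric.isCompact_of_isClosed_isBounded hSclosed hSbdd
  have hSne : S.Nonempty := by
    set i0 : Fin N := ⟨0, hNpos⟩ with hi0
    refine ⟨fun i k => if i = i0 ∧ k = i0 then 1 else 0, ?_⟩
    simp only [hS, Set.mem_setOf_eq, hΦ, dotProduct]
    rw [Finset.sum_eq_single i0]
    · rw [Finset.sum_eq_single i0] <;> simp +contextual
    · intro i _ hi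
      apply Finset.sum_eq_zero
      simp +contextual [hi]
    · simp
  obtain ⟨e₀, he₀S, he₀min'⟩ := hScompact.exists_isMinOn hSne hQcont.continuousOn
  have he₀min : ∀ y ∈ S, Q e₀ ≤ Q y := fun y hy => he₀min' hy
  refine ⟨Q e₀, ?_, ?_⟩
  · rcases lt_or_eq_of_le (hQnonneg e₀) with h | h
    · exact h
    · exfalso
      have := hQzero e₀ h.symm
      rw [this] at he₀S
      simp only [hS, Set.mem_setOf_eq, hΦ] at he₀S
      simp at he₀S
  · intro e
    show Q e₀ * Φ e ≤ Q e
    rcases eq_or_lt_of_le (hΦnonneg e) with h | h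
    · rw [← h, mul_zero]
      exact hQnonneg e
    · have hrpos : 0 < Real.sqrt (Φ e) := Real.sqrt_pos.mpr h
      set r : ℝ := Real.sqrt (Φ e) with hr
      have hr2 : r ^ 2 = Φ e := Real.sq_sqrt (hΦnonneg e)
      set u : Fin N → Fin N → ℝ := r⁻¹ • e with hu
      have hdot : ∀ i, u i ⬝ᵥ u i = r⁻¹^2 * (e i ⬝ᵥ e i) := by
        intro i
        simp only [hu, Pi.smul_apply, smul_dotProduct, dotProduct_smul,
          smul_eq_mul]
        ring
      have hΦu : Φ u = 1 := by
        show (∑ i, u i ⬝ᵥ u i) = 1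
        rw [Finset.sum_congr rfl (fun i _ => hdot i), ← Finset.mul_sum]
        have h2 : (∑ i, e i ⬝ᵥ e i) = r^2 := hr2.symm
        rw [h2]
        field_simp
      have hd1 : ∀ i, a i ⬝ᵥ u i = r⁻¹ * (a i ⬝ᵥ e i) := by
        intro i
        simp only [hu, Pi.smul_apply, dotProduct_smul, smul_eq_mul]
      have hd2 : ∀ i j, (u i - u j) ⬝ᵥ (u i - u j) = r⁻¹^2 * ((e i - e j) ⬝ᵥ (e i - e j)) := by
        intro i j
        have huij : u i - u j = r⁻¹ • (e i - e j) := by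
          simp [hu, smul_sub]
        rw [huij, smul_dotProduct, dotProduct_smul, smul_eq_mul, smul_eq_mul]
        ring
      have hQu : Q u = r⁻¹ ^ 2 * Q e := by
        show (∑ i, α i * (a i ⬝ᵥ u i)^2) +
          (1/2) * ∑ i, ∑ j ∈ Finset.univ.filter (fun j => G.Adj i j),
            β i j * ((u i - u j) ⬝ᵥ (u i - u j)) = r⁻¹ ^ 2 *
          ((∑ i, α i * (a i ⬝ᵥ e i)^2) +
          (1/2) * ∑ i, ∑ j ∈ Finset.univ.filter (fun j => G.Adj i j),
            β i j * ((e i - e j) ⬝ᵥ (e i - e j)))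
        have e1 : (∑ i, α i * (a i ⬝ᵥ u i)^2) = r⁻¹^2 * ∑ i, α i * (a i ⬝ᵥ e i)^2 := by
          rw [Finset.mul_sum]
          exact Finset.sum_congr rfl fun i _ => by rw [hd1 i]; ring
        have e2 : (∑ i, ∑ j ∈ Finset.univ.filter (fun j => G.Adj i j),
              β i j * ((u i - u j) ⬝ᵥ (u i - u j))) =
            r⁻¹^2 * ∑ i, ∑ j ∈ Finset.univ.filter (fun j => G.Adj i j),
              β i j * ((e i - e j) ⬝ᵥ (e i - e j)) := by
          rw [Finset.mul_sum]
          refine Finset.sum_congr rfl fun i _ => ?_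
          rw [Finset.mul_sum]
          exact Finset.sum_congr rfl fun j _ => by rw [hd2 i j]; ring
        rw [e1, e2]; ring
      have hle : Q e₀ ≤ Q u := he₀min u hΦu
      rw [hQu] at hle
      have h2 : Q e₀ * r ^ 2 ≤ Q e := by
        calc Q e₀ * r ^ 2 ≤ (r⁻¹ ^ 2 * Q e) * r ^ 2 :=
              mul_le_mul_of_nonneg_right hle (sq_nonneg r)
          _ = Q e := by field_simp
      calc Q e₀ * Φ e = Q e₀ * r ^ 2 := by rw [hr2]
        _ ≤ Q e := h2


private lemma dot_sum {n : ℕ} {ι : Type*} (s : Finset ι) (v : Fin n → ℝ) (w : ι → Fin n → ℝ) :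
    v ⬝ᵥ (∑ j ∈ s, w j) = ∑ j ∈ s, v ⬝ᵥ w j := by
  classical
  induction s using Finset.induction with
  | empty => simp
  | insert _ _ h ih => rw [Finset.sum_insert h, Finset.sum_insert h, dotProduct_add, ih]

private lemma sym_double_sum (N : ℕ) (G : SimpleGraph (Fin N)) [DecidableRel G.Adj]
    (β : Fin N → Fin N → ℝ) (hβsym : ∀ i j, β i j = β j i)
    (e : Fin N → Fin N → ℝ) :
    (∑ i, ∑ j ∈ Finset.univ.filter (fun j => G.Adj i j), β i j * (e i ⬝ᵥ (e i - e j))) =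
      (1/2) * ∑ i, ∑ j ∈ Finset.univ.filter (fun j => G.Adj i j),
        β i j * ((e i - e j) ⬝ᵥ (e i - e j)) := by
  classical
  have hT : (∑ i, ∑ j ∈ Finset.univ.filter (fun j => G.Adj i j),
        β i j * (e j ⬝ᵥ (e i - e j))) =
      -(∑ i, ∑ j ∈ Finset.univ.filter (fun j => G.Adj i j), β i j * (e i ⬝ᵥ (e i - e j))) := by
    simp only [Finset.sum_filter]
    rw [Finset.sum_comm]
    rw [← Finset.sum_neg_distrib]
    apply Finset.sum_congr rfl
    intro x _
    rw [← Finset.sum_neg_distrib]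
    apply Finset.sum_congr rfl
    intro y _
    by_cases h : G.Adj x y
    · have h' : G.Adj y x := h.symm
      simp only [h, h', if_true]
      rw [hβsym y x, dotProduct_sub, dotProduct_sub]
      rw [dotProduct_comm (e x) (e y)]
      ring
    · have h' : ¬ G.Adj y x := fun hh => h hh.symm
      simp [h, h']
  have hD : (∑ i, ∑ j ∈ Finset.univ.filter (fun j => G.Adj i j),
        β i j * ((e i - e j) ⬝ᵥ (e i - e j))) =
      (∑ i, ∑ j ∈ Finset.univ.filter (fun j => G.Adj i j), β i j * (e i ⬝ᵥ (e i - e j))) -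
      (∑ i, ∑ j ∈ Finset.univ.filter (fun j => G.Adj i j), β i j * (e j ⬝ᵥ (e i - e j))) := by
    rw [← Finset.sum_sub_distrib]
    apply Finset.sum_congr rfl
    intro i _
    rw [← Finset.sum_sub_distrib]
    apply Finset.sum_congr rfl
    intro j _
    rw [sub_dotProduct]
    ring
  rw [hD, hT]
  ring


/-- Global exponential stability of the distributed linear-equation solver: there is a
constant `c > 0` such that every differentiable solution of
`ẋ_i(t) = -α_i (a_iᵀ x_i(t) - b_i) a_i - Σ_{j : {i,j} ∈ E} β_{ij} (x_i(t) - x_j(t))`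
satisfies `‖x(t) - x̄*‖ ≤ e^{-ct} ‖x(0) - x̄*‖` (Euclidean norm) for all `t ≥ 0`, where
`x̄* = (x*, …, x*)` and `x* = A⁻¹ b`; in particular `x_i(t) → x*` for every `i` and every
initial condition. -/
theorem distributed_solver_global_exponential_stability
    (N : ℕ) (hN : 2 ≤ N) (G : SimpleGraph (Fin N)) [DecidableRel G.Adj]
    (hG : G.Connected)
    (a : Fin N → Fin N → ℝ) (b : Fin N → ℝ)
    (A : Matrix (Fin N) (Fin N) ℝ) (hA : A = Matrix.of a) (hdet : IsUnit A.det)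
    (xstar : Fin N → ℝ) (hxstar : xstar = A⁻¹ *ᵥ b)
    (α : Fin N → ℝ) (hα : ∀ i, 0 < α i)
    (β : Fin N → Fin N → ℝ) (hβsym : ∀ i j, β i j = β j i)
    (hβ : ∀ i j, G.Adj i j → 0 < β i j) :
    ∃ c : ℝ, 0 < c ∧
      ∀ x : ℝ → Fin N → Fin N → ℝ,
        (∀ i : Fin N, ∀ t : ℝ, 0 ≤ t →
          HasDerivAt (fun s => x s i)
            ((-(α i * (a i ⬝ᵥ x t i - b i))) • a i -
              ∑ j ∈ Finset.univ.filter (fun j => G.Adj i j), β i j • (x t i - x t j)) t) →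
        (∀ t : ℝ, 0 ≤ t →
          Real.sqrt (∑ i : Fin N, (x t i - xstar) ⬝ᵥ (x t i - xstar)) ≤
            Real.exp (-c * t) *
              Real.sqrt (∑ i : Fin N, (x 0 i - xstar) ⬝ᵥ (x 0 i - xstar))) ∧
        ∀ i : Fin N, Tendsto (fun t => x t i) atTop (nhds xstar) := by
  classical
  have hAx : A *ᵥ xstar = b := by
    rw [hxstar, Matrix.mulVec_mulVec, Matrix.mul_nonsing_inv A hdet, Matrix.one_mulVec]
  have hax : ∀ i, a i ⬝ᵥ xstar = b i := by
    intro i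
    have h := congrFun hAx i
    rw [hA] at h
    simpa [Matrix.mulVec, dotProduct, Matrix.of_apply] using h
  have hinj : ∀ v : Fin N → ℝ, (∀ i, a i ⬝ᵥ v = 0) → v = 0 := by
    intro v hv
    have hinj' : Function.Injective (A.mulVec) := by
      rw [Matrix.mulVec_injective_iff_isUnit]
      exact (Matrix.isUnit_iff_isUnit_det A).mpr hdet
    have h0 : A *ᵥ v = A *ᵥ 0 := by
      rw [Matrix.mulVec_zero]
      funext i
      rw [hA]
      simpa [Matrix.mulVec, dotProduct, Matrix.of_apply] using hv i
    exact hinj' h0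
  obtain ⟨c, hc, hcoer⟩ := coercive N hN G hG a hinj α hα β hβ
  refine ⟨c, hc, ?_⟩
  intro x hx
  set V : ℝ → ℝ := fun t => ∑ i, (x t i - xstar) ⬝ᵥ (x t i - xstar) with hV
  have hVnonneg : ∀ t, 0 ≤ V t := fun t => Finset.sum_nonneg fun i _ => dps_nonneg _
  -- the derivative of V
  set σ : ℝ → ℝ := fun t => ∑ i, 2 * ((x t i - xstar) ⬝ᵥ
      ((-(α i * (a i ⬝ᵥ x t i - b i))) • a i -
        ∑ j ∈ Finset.univ.filter (fun j => G.Adj i j), β i j • (x t i - x t j))) with hσ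
  have hVd : ∀ t : ℝ, 0 ≤ t → HasDerivAt V (σ t) t := by
    intro t ht
    have h1 : ∀ i : Fin N, HasDerivAt (fun s => (x s i - xstar) ⬝ᵥ (x s i - xstar))
        (2 * ((x t i - xstar) ⬝ᵥ
          ((-(α i * (a i ⬝ᵥ x t i - b i))) • a i -
            ∑ j ∈ Finset.univ.filter (fun j => G.Adj i j), β i j • (x t i - x t j)))) t := by
      intro i
      set D : Fin N → ℝ := (-(α i * (a i ⬝ᵥ x t i - b i))) • a i -
          ∑ j ∈ Finset.univ.filter (fun j => G.Adj i j), β i j • (x t i - x t j) with hD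
      have hDk : ∀ k, HasDerivAt (fun s => x s i k) (D k) t :=
        fun k => hasDerivAt_pi.mp (hx i t ht) k
      have hk : ∀ k, HasDerivAt (fun s => (x s i k - xstar k) * (x s i k - xstar k))
          (D k * (x t i k - xstar k) + (x t i k - xstar k) * D k) t :=
        fun k => ((hDk k).sub_const (xstar k)).mul ((hDk k).sub_const (xstar k))
      have hsum := HasDerivAt.fun_sum (u := Finset.univ) (fun k _ => hk k)
      have heq : (∑ k, (D k * (x t i k - xstar k) + (x t i k - xstar k) * D k))
          = 2 * ((x t i - xstar) ⬝ᵥ D) := by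
        show _ = 2 * ∑ k, (x t i - xstar) k * D k
        rw [Finset.mul_sum]
        exact Finset.sum_congr rfl fun k _ => by simp [Pi.sub_apply]; ring
      rw [← heq]
      exact hsum
    exact HasDerivAt.fun_sum (u := Finset.univ) (fun i _ => h1 i)
  -- algebraic identity for σ
  have hσle : ∀ t : ℝ, σ t ≤ -2 * c * V t := by
    intro t
    set e : Fin N → Fin N → ℝ := fun i => x t i - xstar with he
    have h2 : ∀ i : Fin N, (x t i - xstar) ⬝ᵥ
        ((-(α i * (a i ⬝ᵥ x t i - b i))) • a i -
          ∑ j ∈ Finset.univ.filter (fun j => G.Adj i j), β i j • (x t i - x t j))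
        = -(α i * (a i ⬝ᵥ e i)^2) -
          ∑ j ∈ Finset.univ.filter (fun j => G.Adj i j), β i j * (e i ⬝ᵥ (e i - e j)) := by
      intro i
      have hb : a i ⬝ᵥ x t i - b i = a i ⬝ᵥ e i := by
        rw [he]
        show _ = a i ⬝ᵥ (x t i - xstar)
        rw [dotProduct_sub, hax i]
      have hsub : ∀ j, x t i - x t j = e i - e j := by
        intro j
        show _ = (x t i - xstar) - (x t j - xstar)
        abel
      have hL : (x t i - xstar) = e i := rfl
      rw [hL, dotProduct_sub, hb]
      congr 1
      · rw [dotProduct_smul, smul_eq_mul, dotProduct_comm]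
        ring
      · rw [dot_sum]
        apply Finset.sum_congr rfl
        intro j _
        rw [hsub j, dotProduct_smul, smul_eq_mul]
    have hsplit : σ t = -2 * (∑ i, α i * (a i ⬝ᵥ e i)^2) -
        2 * (∑ i, ∑ j ∈ Finset.univ.filter (fun j => G.Adj i j),
          β i j * (e i ⬝ᵥ (e i - e j))) := by
      rw [hσ]
      show (∑ i, 2 * ((x t i - xstar) ⬝ᵥ _)) = _
      rw [Finset.sum_congr rfl (fun i _ => by rw [h2 i])]
      rw [Finset.mul_sum, Finset.mul_sum, ← Finset.sum_sub_distrib]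
      exact Finset.sum_congr rfl fun i _ => by ring
    rw [hsplit, sym_double_sum N G β hβsym e]
    have hco := hcoer e
    have hVt : V t = ∑ i, e i ⬝ᵥ e i := rfl
    rw [hVt]
    linarith
  -- Gronwall
  set W : ℝ → ℝ := fun t => Real.exp (2*c*t) * V t with hW
  have hWd : ∀ t : ℝ, 0 ≤ t →
      HasDerivAt W (2*c*Real.exp (2*c*t) * V t + Real.exp (2*c*t) * σ t) t := by
    intro t ht
    have h1 : HasDerivAt (fun s : ℝ => 2*c*s) (2*c) t := by
      simpa using (hasDerivAt_id t).const_mul (2*c)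
    have hexp : HasDerivAt (fun s : ℝ => Real.exp (2*c*s)) (2*c*Real.exp (2*c*t)) t := by
      have := h1.exp
      convert this using 1
      ring
    exact hexp.mul (hVd t ht)
  have hWanti : AntitoneOn W (Set.Ici (0:ℝ)) := by
    apply antitoneOn_of_deriv_nonpos (convex_Ici 0)
    · intro t ht
      exact (hWd t ht).continuousAt.continuousWithinAt
    · intro t ht
      rw [interior_Ici] at ht
      exact (hWd t (le_of_lt ht)).differentiableAt.differentiableWithinAt
    · intro t ht
      rw [interior_Ici] at ht
      rw [(hWd t ht.le).deriv]
      have h3 := hσle t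
      have h4 := (Real.exp_pos (2*c*t)).le
      nlinarith [mul_le_mul_of_nonneg_left (hσle t) h4]
  have hbound : ∀ t : ℝ, 0 ≤ t → V t ≤ Real.exp (-(2*c*t)) * V 0 := by
    intro t ht
    have h5 : W t ≤ W 0 := hWanti Set.self_mem_Ici ht ht
    have h6 : W 0 = V 0 := by simp [hW]
    have h7 : Real.exp (2*c*t) * V t ≤ V 0 := by
      rw [← h6]; exact h5
    have h8 := Real.exp_pos (2*c*t)
    rw [Real.exp_neg]
    calc V t = (Real.exp (2*c*t))⁻¹ * (Real.exp (2*c*t) * V t) := by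
          field_simp
      _ ≤ (Real.exp (2*c*t))⁻¹ * V 0 := by
          apply mul_le_mul_of_nonneg_left h7 (by positivity)
  have hsqrt : ∀ t : ℝ, 0 ≤ t → Real.sqrt (V t) ≤ Real.exp (-c*t) * Real.sqrt (V 0) := by
    intro t ht
    have h9 : Real.exp (-(2*c*t)) = Real.exp (-c*t) * Real.exp (-c*t) := by
      rw [← Real.exp_add]; ring_nf
    have h10 := Real.sqrt_le_sqrt (hbound t ht)
    rw [h9] at h10
    rwa [Real.sqrt_mul (mul_nonneg (Real.exp_nonneg _) (Real.exp_nonneg _)),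
      Real.sqrt_mul_self (Real.exp_nonneg _)] at h10
  constructor
  · exact fun t ht => hsqrt t ht
  · intro i
    rw [tendsto_pi_nhds]
    intro k
    have hb : ∀ t : ℝ, 0 ≤ t → |x t i k - xstar k| ≤ Real.exp (-c*t) * Real.sqrt (V 0) := by
      intro t ht
      have h5 : (x t i k - xstar k)^2 ≤ V t := by
        have s1 : (x t i k - xstar k)^2 ≤ (x t i - xstar) ⬝ᵥ (x t i - xstar) := by
          have s2 := Finset.single_le_sum
            (f := fun k => (x t i - xstar) k * (x t i - xstar) k)
            (fun k _ => mul_self_nonneg _) (Finset.mem_univ k)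
          calc (x t i k - xstar k)^2 = (x t i - xstar) k * (x t i - xstar) k := by
                simp [Pi.sub_apply]; ring
            _ ≤ ∑ k, (x t i - xstar) k * (x t i - xstar) k := s2
            _ = (x t i - xstar) ⬝ᵥ (x t i - xstar) := rfl
        exact s1.trans (Finset.single_le_sum
          (f := fun i => (x t i - xstar) ⬝ᵥ (x t i - xstar))
          (fun i _ => dps_nonneg _) (Finset.mem_univ i))
      calc |x t i k - xstar k| = Real.sqrt ((x t i k - xstar k)^2) :=
            (Real.sqrt_sq_eq_abs _).symm
        _ ≤ Real.sqrt (V t) := Real.sqrt_le_sqrt h5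
        _ ≤ Real.exp (-c*t) * Real.sqrt (V 0) := hsqrt t ht
    have hg : Tendsto (fun t : ℝ => Real.exp (-c*t) * Real.sqrt (V 0)) atTop (nhds 0) := by
      have h6 : Tendsto (fun t : ℝ => c*t) atTop atTop :=
        Tendsto.const_mul_atTop hc tendsto_id
      have h7 : Tendsto (fun t : ℝ => -(c*t)) atTop atBot :=
        tendsto_neg_atTop_atBot.comp h6
      have h8 : Tendsto (fun t : ℝ => Real.exp (-c*t)) atTop (nhds 0) := by
        have h9 : Tendsto (fun t : ℝ => -c*t) atTop atBot := by
          simpa [neg_mul] using h7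
        exact Real.tendsto_exp_atBot.comp h9
      simpa using h8.mul_const (Real.sqrt (V 0))
    have habs : Tendsto (fun t : ℝ => |x t i k - xstar k|) atTop (nhds 0) := by
      apply tendsto_of_tendsto_of_tendsto_of_le_of_le' tendsto_const_nhds hg
      · exact Filter.Eventually.of_forall fun t => abs_nonneg _
      · filter_upwards [eventually_ge_atTop (0:ℝ)] with t ht using hb t ht
    have : Tendsto (fun t : ℝ => x t i k) atTop (nhds (xstar k)) := by
      rw [tendsto_iff_dist_tendsto_zero]
      simpa [Real.dist_eq] using habs
    exact this
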